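/- Let μ > 0, D > 0, R₁ > 0, S₁ > 0, f* > 0, g* > 0, and let σ ∈ C²(ℝ) with σ′(s) ≤ 0 for all s ≥ 0. For z > 0 and Γ* ≥ 0 define the symmetric 3×3 real matrix b(z,Γ*) with entries (writing s′ := σ′(Γ*)): b₁₁ = (S₁μ/R₁)(S₁g*³/3 + S₁μ(f*³/3 + f*²g* + f*g*²)), b₁₂ = b₂₁ = S₁μ(f*³/3 + f*²g*/2), b₂₂ = R₁f*³/3, b₁₃ = b₃₁ = −(1/2)[(S₁μ/R₁)(μf*²/2 + μf*g* + g*²/2)s′ − z(S₁g*²/2 + S₁μ(f*²/2 + f*g*))Γ*], b₂₃ = b₃₂ = −(1/2)[μ(f*²/2)s′ − zR₁(f*²/2)Γ*], b₃₃ = −z(μf* + g*)Γ*s′ + zD. Then there exist z > 0 and ε > 0 such that for every Γ* with 0 ≤ Γ* < ε the matrix b(z,Γ*) is positive definite. -/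

import Mathlib

open Matrix

private lemma symPosDef_aux_quad (a bb cc lam x0 x1 : ℝ)
    (hlam_lt : lam < a)
    (key : (a - lam) * (cc - lam) - bb ^ 2 = lam ^ 2) :
    lam * (x0 ^ 2 + x1 ^ 2) ≤ a * x0 ^ 2 + 2 * bb * x0 * x1 + cc * x1 ^ 2 := by
  have hident : (a - lam) * ((a - lam) * x0 ^ 2 + 2 * bb * x0 * x1 + (cc - lam) * x1 ^ 2)
      = ((a - lam) * x0 + bb * x1) ^ 2 + lam ^ 2 * x1 ^ 2 := by
    linear_combination x1 ^ 2 * key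
  have h3 : 0 ≤ (a - lam) * ((a - lam) * x0 ^ 2 + 2 * bb * x0 * x1 + (cc - lam) * x1 ^ 2) := by
    rw [hident]; positivity
  have h4 : 0 ≤ (a - lam) * x0 ^ 2 + 2 * bb * x0 * x1 + (cc - lam) * x1 ^ 2 := by
    by_contra hng
    push_neg at hng
    have h5 := mul_neg_of_pos_of_neg (sub_pos.mpr hlam_lt) hng
    linarith
  nlinarith [h4]

private lemma symPosDef_aux_sq (K L u v : ℝ)
    (h1 : -K ≤ u) (h2 : u ≤ 0) (h3 : 0 ≤ v) (h4 : v ≤ L) :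
    (-(1 / 2) * (u - v)) ^ 2 ≤ 1 / 4 * (K + L) ^ 2 := by
  have h9 : 0 ≤ K + L + (u - v) := by linarith
  have h10 : 0 ≤ K + L - (u - v) := by linarith
  nlinarith [mul_nonneg h9 h10]

private lemma symPosDef_aux_final (a bb cc lam C c1 c2 d x0 x1 x2 : ℝ)
    (hlam : 0 < lam)
    (hQ : lam * (x0 ^ 2 + x1 ^ 2) ≤ a * x0 ^ 2 + 2 * bb * x0 * x1 + cc * x1 ^ 2)
    (hcC : 2 * c1 ^ 2 + 2 * c2 ^ 2 ≤ C)
    (hld : C + lam ≤ lam * d)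
    (hxi : x0 ≠ 0 ∨ x1 ≠ 0 ∨ x2 ≠ 0) :
    0 < x0 * (a * x0 + bb * x1 + c1 * x2) + x1 * (bb * x0 + cc * x1 + c2 * x2)
      + x2 * (c1 * x0 + c2 * x1 + d * x2) := by
  have E1 := mul_le_mul_of_nonneg_left hQ hlam.le
  have E2 : (0:ℝ) ≤ lam ^ 2 * x0 ^ 2 + 4 * lam * c1 * x0 * x2 + 4 * c1 ^ 2 * x2 ^ 2 := by
    linarith [sq_nonneg (lam * x0 + 2 * c1 * x2)]
  have E3 : (0:ℝ) ≤ lam ^ 2 * x1 ^ 2 + 4 * lam * c2 * x1 * x2 + 4 * c2 ^ 2 * x2 ^ 2 := by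
    linarith [sq_nonneg (lam * x1 + 2 * c2 * x2)]
  have E4 := mul_le_mul_of_nonneg_right hld (sq_nonneg x2)
  have E5 := mul_le_mul_of_nonneg_right hcC (sq_nonneg x2)
  have h6 : 0 < lam * (x0 * (a * x0 + bb * x1 + c1 * x2) + x1 * (bb * x0 + cc * x1 + c2 * x2)
      + x2 * (c1 * x0 + c2 * x1 + d * x2)) := by
    have N0 : 0 ≤ lam * lam * x0 ^ 2 := by positivity
    have N1 : 0 ≤ lam * lam * x1 ^ 2 := by positivity
    have N2 : 0 ≤ lam * x2 ^ 2 := by positivity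
    rcases hxi with h | h | h
    · have hstrict : 0 < lam * lam * x0 ^ 2 := by positivity
      linarith [E1, E2, E3, E4, E5, hstrict, N1, N2]
    · have hstrict : 0 < lam * lam * x1 ^ 2 := by positivity
      linarith [E1, E2, E3, E4, E5, hstrict, N0, N2]
    · have hstrict : 0 < lam * x2 ^ 2 := by positivity
      linarith [E1, E2, E3, E4, E5, hstrict, N0, N1]
  by_contra hng
  push_neg at hng
  have h7 := mul_nonpos_iff.mpr (Or.inr ⟨hng, hlam.le⟩)
  linarith [h6, h7]

private lemma symPosDef_aux_lt (a bb cc lam : ℝ) (ha : 0 < a) (hcc : 0 < cc)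
    (heq : lam * (a + cc) = a * cc - bb ^ 2) : lam < a := by
  nlinarith [sq_nonneg bb, mul_pos ha ha, mul_pos ha hcc]

set_option maxHeartbeats 800000 in
/-- Key step in the proof of Lemma 3.5 of the paper: the symmetrization `b_G^z(u*)` of
the transformed diffusion matrix of the gravity-driven system linearized at the
constant steady state `u* = (f*,g*,Γ*)` is positive definite for a suitable weight
`z > 0`, provided the surfactant concentration `Γ*` is small enough. -/
theorem symmetrized_matrix_posDef
    (μ D R₁ S₁ fs gs : ℝ)
    (hμ : 0 < μ) (hD : 0 < D) (hR₁ : 0 < R₁) (hS₁ : 0 < S₁)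
    (hfs : 0 < fs) (hgs : 0 < gs)
    (σ : ℝ → ℝ) (hσ : ContDiff ℝ 2 σ) (hσ' : ∀ s : ℝ, 0 ≤ s → deriv σ s ≤ 0) :
    ∃ z : ℝ, 0 < z ∧ ∃ ε : ℝ, 0 < ε ∧ ∀ Γs : ℝ, 0 ≤ Γs → Γs < ε →
      (!![S₁ * μ / R₁ * (S₁ * gs ^ 3 / 3 + S₁ * μ * (fs ^ 3 / 3 + fs ^ 2 * gs + fs * gs ^ 2)),
          S₁ * μ * (fs ^ 3 / 3 + fs ^ 2 * gs / 2),
          -(1 / 2) * (S₁ * μ / R₁ * (μ * fs ^ 2 / 2 + μ * fs * gs + gs ^ 2 / 2) * deriv σ Γs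
            - z * (S₁ * gs ^ 2 / 2 + S₁ * μ * (fs ^ 2 / 2 + fs * gs)) * Γs);
         S₁ * μ * (fs ^ 3 / 3 + fs ^ 2 * gs / 2),
          R₁ * fs ^ 3 / 3,
          -(1 / 2) * (μ * (fs ^ 2 / 2) * deriv σ Γs - z * R₁ * (fs ^ 2 / 2) * Γs);
         -(1 / 2) * (S₁ * μ / R₁ * (μ * fs ^ 2 / 2 + μ * fs * gs + gs ^ 2 / 2) * deriv σ Γs
            - z * (S₁ * gs ^ 2 / 2 + S₁ * μ * (fs ^ 2 / 2 + fs * gs)) * Γs),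
          -(1 / 2) * (μ * (fs ^ 2 / 2) * deriv σ Γs - z * R₁ * (fs ^ 2 / 2) * Γs),
          -z * (μ * fs + gs) * Γs * deriv σ Γs + z * D] :
        Matrix (Fin 3) (Fin 3) ℝ).PosDef := by
  obtain ⟨M, hM⟩ : ∃ M : ℝ, ∀ t ∈ Set.Icc (0:ℝ) 1, ‖deriv σ t‖ ≤ M :=
    isCompact_Icc.exists_bound_of_continuousOn
      ((hσ.continuous_deriv (by norm_num)).continuousOn)
  have hM0 : 0 ≤ M := le_trans (norm_nonneg _) (hM 0 (by constructor <;> norm_num))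
  -- the fixed 2×2 block
  set a : ℝ := S₁ * μ / R₁ * (S₁ * gs ^ 3 / 3 + S₁ * μ * (fs ^ 3 / 3 + fs ^ 2 * gs + fs * gs ^ 2))
    with ha_def
  set bb : ℝ := S₁ * μ * (fs ^ 3 / 3 + fs ^ 2 * gs / 2) with hbb_def
  set cc : ℝ := R₁ * fs ^ 3 / 3 with hcc_def
  have ha : 0 < a := by rw [ha_def]; positivity
  have hcc : 0 < cc := by rw [hcc_def]; positivity
  have hdetpos : 0 < a * cc - bb ^ 2 := by
    have hdet : a * cc - bb ^ 2 = S₁ ^ 2 * μ * fs ^ 3 * gs ^ 3 / 9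
        + S₁ ^ 2 * μ ^ 2 * fs ^ 4 * gs ^ 2 / 12 := by
      rw [ha_def, hbb_def, hcc_def]; field_simp; ring
    rw [hdet]; positivity
  clear_value a bb cc
  clear ha_def hbb_def hcc_def
  have hbb2 : 0 ≤ bb ^ 2 := sq_nonneg bb
  set lam : ℝ := (a * cc - bb ^ 2) / (a + cc) with hlam_def
  have hsum : 0 < a + cc := by linarith
  have hlam : 0 < lam := div_pos hdetpos hsum
  have hlam_eq : lam * (a + cc) = a * cc - bb ^ 2 := by
    rw [hlam_def]; field_simp
  clear_value lam
  clear hlam_def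
  have hlam_lt_a : lam < a := symPosDef_aux_lt a bb cc lam ha hcc hlam_eq
  have key : (a - lam) * (cc - lam) - bb ^ 2 = lam ^ 2 := by linear_combination -hlam_eq
  -- constants in the third column
  set K₁ : ℝ := S₁ * μ / R₁ * (μ * fs ^ 2 / 2 + μ * fs * gs + gs ^ 2 / 2) with hK₁_def
  set L₁ : ℝ := S₁ * gs ^ 2 / 2 + S₁ * μ * (fs ^ 2 / 2 + fs * gs) with hL₁_def
  set K₂ : ℝ := μ * (fs ^ 2 / 2) with hK₂_def
  have hK₁ : 0 ≤ K₁ := by rw [hK₁_def]; positivity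
  have hL₁ : 0 ≤ L₁ := by rw [hL₁_def]; positivity
  have hK₂ : 0 ≤ K₂ := by rw [hK₂_def]; positivity
  have hL₂ : 0 ≤ R₁ * (fs ^ 2 / 2) := by positivity
  clear_value K₁ L₁ K₂
  clear hK₁_def hL₁_def hK₂_def
  set L₂ : ℝ := R₁ * (fs ^ 2 / 2) with hL₂_def
  set C : ℝ := (1/2) * ((K₁ * M + L₁) ^ 2 + (K₂ * M + L₂) ^ 2) with hC_def
  have hC : 0 ≤ C := by rw [hC_def]; positivity
  have hz0 : 0 < (C / lam + 1) / D := by positivity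
  refine ⟨(C / lam + 1) / D, hz0, ?_⟩
  set z : ℝ := (C / lam + 1) / D with hz_def
  have hz : 0 < z := hz0
  have hCl : 0 < C + lam := by linarith
  have hlzD : lam * (z * D) = C + lam := by
    rw [hz_def]; field_simp
  clear_value z C
  clear hz_def
  refine ⟨min 1 (lam / ((C + lam) * z)), by positivity, ?_⟩
  intro Γs hΓ0 hΓε
  have hΓ1 : Γs ≤ 1 := le_of_lt (lt_of_lt_of_le hΓε (min_le_left _ _))
  have hzΓ : z * Γs ≤ 1 := by
    have h2 : Γs < lam / ((C + lam) * z) := lt_of_lt_of_le hΓε (min_le_right _ _)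
    have h3 : z * Γs < lam / (C + lam) := by
      have h4 := mul_lt_mul_of_pos_left h2 hz
      calc z * Γs < z * (lam / ((C + lam) * z)) := h4
        _ = lam / (C + lam) := by field_simp
    have hfrac : lam / (C + lam) ≤ 1 := by
      rw [div_le_one hCl]; linarith
    linarith
  clear hΓε
  -- abbreviations for the Γ-dependent entries
  set s' : ℝ := deriv σ Γs with hs'_def
  have hs'0 : s' ≤ 0 := hσ' Γs hΓ0
  have hs'M : -M ≤ s' := by
    have h5 := hM Γs ⟨hΓ0, hΓ1⟩
    rw [hs'_def]
    rw [Real.norm_eq_abs, abs_le] at h5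
    linarith [h5.1]
  clear_value s'
  clear hs'_def hM hσ hσ'
  set c1 : ℝ := -(1 / 2) * (K₁ * s' - z * L₁ * Γs) with hc1_def
  set c2 : ℝ := -(1 / 2) * (K₂ * s' - z * R₁ * (fs ^ 2 / 2) * Γs) with hc2_def
  have hc2_eq : c2 = -(1 / 2) * (K₂ * s' - z * L₂ * Γs) := by
    rw [hc2_def, hL₂_def]; ring
  set d : ℝ := -z * (μ * fs + gs) * Γs * s' + z * D with hd_def
  -- bounds on the Γ-dependent entries
  have hzL1 : z * L₁ * Γs ≤ L₁ := by
    calc z * L₁ * Γs = L₁ * (z * Γs) := by ring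
      _ ≤ L₁ * 1 := mul_le_mul_of_nonneg_left hzΓ hL₁
      _ = L₁ := mul_one _
  have hzL2 : z * L₂ * Γs ≤ L₂ := by
    calc z * L₂ * Γs = L₂ * (z * Γs) := by ring
      _ ≤ L₂ * 1 := mul_le_mul_of_nonneg_left hzΓ hL₂
      _ = L₂ := mul_one _
  have hzLΓ1 : 0 ≤ z * L₁ * Γs := by positivity
  have hzLΓ2 : 0 ≤ z * L₂ * Γs := by positivity
  have hK₁s : -(K₁ * M) ≤ K₁ * s' := by
    have h8 : 0 ≤ K₁ * (s' + M) := mul_nonneg hK₁ (by linarith)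
    linarith [h8, mul_add K₁ s' M]
  have hK₁s0 : K₁ * s' ≤ 0 := mul_nonpos_of_nonneg_of_nonpos hK₁ hs'0
  have hK₂s : -(K₂ * M) ≤ K₂ * s' := by
    have h8 : 0 ≤ K₂ * (s' + M) := mul_nonneg hK₂ (by linarith)
    linarith [h8, mul_add K₂ s' M]
  have hK₂s0 : K₂ * s' ≤ 0 := mul_nonpos_of_nonneg_of_nonpos hK₂ hs'0
  have hc1sq : c1 ^ 2 ≤ 1 / 4 * (K₁ * M + L₁) ^ 2 := by
    rw [hc1_def]
    exact symPosDef_aux_sq (K₁ * M) L₁ (K₁ * s') (z * L₁ * Γs) hK₁s hK₁s0 hzLΓ1 hzL1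
  have hc2sq : c2 ^ 2 ≤ 1 / 4 * (K₂ * M + L₂) ^ 2 := by
    rw [hc2_eq]
    exact symPosDef_aux_sq (K₂ * M) L₂ (K₂ * s') (z * L₂ * Γs) hK₂s hK₂s0 hzLΓ2 hzL2
  have hcC : 2 * c1 ^ 2 + 2 * c2 ^ 2 ≤ C := by
    rw [hC_def]; linarith [hc1sq, hc2sq]
  have hdzD : z * D ≤ d := by
    rw [hd_def]
    have h8 : 0 ≤ z * (μ * fs + gs) * Γs * (-s') :=
      mul_nonneg (mul_nonneg (mul_nonneg hz.le
        (by positivity : (0:ℝ) ≤ μ * fs + gs)) hΓ0) (neg_nonneg.mpr hs'0)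
    have h9 : -z * (μ * fs + gs) * Γs * s' = z * (μ * fs + gs) * Γs * (-s') := by ring
    linarith [h8, h9]
  have hld : C + lam ≤ lam * d := by
    have h9 := mul_le_mul_of_nonneg_left hdzD hlam.le
    linarith [h9, hlzD]
  clear_value c1 c2 d
  clear hc1_def hc2_def hd_def hc2_eq hC_def hL₂_def
  -- positive definiteness
  rw [Matrix.posDef_iff_dotProduct_mulVec]
  constructor
  · ext i j
    fin_cases i <;> fin_cases j <;> simp
  · intro x hx
    have hexp : dotProduct (star x)
        ((!![a, bb, c1; bb, cc, c2; c1, c2, d] : Matrix (Fin 3) (Fin 3) ℝ) *ᵥ x)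
        = x 0 * (a * x 0 + bb * x 1 + c1 * x 2) + x 1 * (bb * x 0 + cc * x 1 + c2 * x 2)
          + x 2 * (c1 * x 0 + c2 * x 1 + d * x 2) := by
      simp [dotProduct, mulVec, Fin.sum_univ_three]
    rw [hexp]
    have hxi : x 0 ≠ 0 ∨ x 1 ≠ 0 ∨ x 2 ≠ 0 := by
      by_contra h
      push_neg at h
      exact hx (funext fun i => by fin_cases i <;> simp [h.1, h.2.1, h.2.2])
    exact symPosDef_aux_final a bb cc lam C c1 c2 d (x 0) (x 1) (x 2) hlam
      (symPosDef_aux_quad a bb cc lam (x 0) (x 1) hlam_lt_a key) hcC hld hxi
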